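/- Characterization of rings admitting common left multiples of linear polynomials: let A be a ring, S an endomorphism, D an S-derivation, R = A[t;S,D]. The following are equivalent: (1) for every a,b ∈ A there is a monic polynomial of degree 2 in R(t−a) ∩ R(t−b); (2) for every r, b ∈ A there exists c ∈ A with c·r = S(r)·b + D(r). -/

import Mathlib

section Aux

variable {A R : Type*} [Ring A] [Ring R]

/-- The sequence `N a i` = right evaluation of `tⁱ` at `a`. -/
def Ncoef (S : A →+* A) (D : A →+ A) (a : A) : ℕ → A
  | 0 => 1
  | i + 1 => S (Ncoef S D a i) * a + D (Ncoef S D a i)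

variable (S : A →+* A) (D : A →+ A)
  (hD : ∀ x y : A, D (x * y) = S x * D y + D x * y)
  (ι : A →+* R) (t : R)
  (hcomm : ∀ x : A, t * ι x = ι (S x) * t + ι (D x))
  (hfree : ∀ r : R, ∃! c : ℕ →₀ A, r = c.sum fun i k => ι k * t ^ i)

/-- The coefficients of `r` in the basis `tⁱ`. -/
noncomputable def coeffs (r : R) : ℕ →₀ A := (hfree r).choose

theorem coeffs_spec (r : R) : r = (coeffs ι t hfree r).sum fun i k => ι k * t ^ i :=
  (hfree r).choose_spec.1

theorem coeffs_eq {r : R} {c : ℕ →₀ A} (hc : r = c.sum fun i k => ι k * t ^ i) :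
    coeffs ι t hfree r = c :=
  ((hfree r).choose_spec.2 c hc).symm

/-- Right evaluation at `a`. -/
noncomputable def ev (a : A) (r : R) : A :=
  (coeffs ι t hfree r).sum fun i k => k * Ncoef S D a i

theorem ev_spec {r : R} {c : ℕ →₀ A} (a : A) (hc : r = c.sum fun i k => ι k * t ^ i) :
    ev S D ι t hfree a r = c.sum fun i k => k * Ncoef S D a i := by
  rw [ev, coeffs_eq ι t hfree hc]

theorem h_zero : ∀ i : ℕ, (fun i k => ι k * t ^ i) i (0 : A) = 0 := by
  intro i; simp

theorem g_zero (a : A) : ∀ i : ℕ, (fun i (k : A) => k * Ncoef S D a i) i (0 : A) = 0 := by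
  intro i; simp

theorem ev_add (a : A) (r s : R) :
    ev S D ι t hfree a (r + s) = ev S D ι t hfree a r + ev S D ι t hfree a s := by
  have hrs : r + s = (coeffs ι t hfree r + coeffs ι t hfree s).sum fun i k => ι k * t ^ i := by
    rw [Finsupp.sum_add_index' (h_zero ι t) (by intro i b₁ b₂; simp [add_mul])]
    rw [← coeffs_spec ι t hfree r, ← coeffs_spec ι t hfree s]
  rw [ev_spec S D ι t hfree a hrs,
    Finsupp.sum_add_index' (g_zero S D a) (by intro i b₁ b₂; simp [add_mul])]
  rfl

theorem ev_neg (a : A) (r : R) : ev S D ι t hfree a (-r) = -ev S D ι t hfree a r := by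
  have hr : -r = (-(coeffs ι t hfree r)).sum fun i k => ι k * t ^ i := by
    rw [Finsupp.sum_neg_index (h_zero ι t)]
    simp only [map_neg, neg_mul]
    rw [show ((coeffs ι t hfree r).sum fun a b => -(ι b * t ^ a)) =
        -((coeffs ι t hfree r).sum fun a b => ι b * t ^ a) from Finset.sum_neg_distrib _,
      ← coeffs_spec ι t hfree r]
  rw [ev_spec S D ι t hfree a hr, Finsupp.sum_neg_index (g_zero S D a)]
  simp only [neg_mul]
  rw [show ((coeffs ι t hfree r).sum fun i k => -(k * Ncoef S D a i)) =
      -((coeffs ι t hfree r).sum fun i k => k * Ncoef S D a i) from Finset.sum_neg_distrib _]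
  rfl

theorem ev_iota_mul (a x : A) (r : R) :
    ev S D ι t hfree a (ι x * r) = x * ev S D ι t hfree a r := by
  have hr : ι x * r =
      (Finsupp.mapRange (x * ·) (mul_zero x) (coeffs ι t hfree r)).sum
        fun i k => ι k * t ^ i := by
    rw [Finsupp.sum_mapRange_index (h_zero ι t)]
    conv_lhs => rw [coeffs_spec ι t hfree r]
    rw [Finsupp.mul_sum]
    simp [mul_assoc]
  rw [ev_spec S D ι t hfree a hr, Finsupp.sum_mapRange_index (g_zero S D a)]
  show ((coeffs ι t hfree r).sum fun i k => x * k * Ncoef S D a i) =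
    x * (coeffs ι t hfree r).sum fun i k => k * Ncoef S D a i
  rw [Finsupp.mul_sum]
  exact Finsupp.sum_congr fun i _ => mul_assoc _ _ _

theorem ev_t_mul (hD : ∀ x y : A, D (x * y) = S x * D y + D x * y)
    (hcomm : ∀ x : A, t * ι x = ι (S x) * t + ι (D x)) (a : A) (r : R) :
    ev S D ι t hfree a (t * r) =
      S (ev S D ι t hfree a r) * a + D (ev S D ι t hfree a r) := by
  set c := coeffs ι t hfree r with hc
  have hr : t * r =
      ((Finsupp.mapRange (D ·) (map_zero D) c) +
        Finsupp.mapDomain Nat.succ (Finsupp.mapRange (S ·) (map_zero S) c)).sum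
        fun i k => ι k * t ^ i := by
    rw [Finsupp.sum_add_index' (h_zero ι t) (by intro i b₁ b₂; simp [add_mul]),
      Finsupp.sum_mapRange_index (h_zero ι t),
      Finsupp.sum_mapDomain_index_inj Nat.succ_injective,
      Finsupp.sum_mapRange_index (fun i => by simp)]
    conv_lhs => rw [coeffs_spec ι t hfree r, Finsupp.mul_sum]
    rw [← hc, ← Finsupp.sum_add]
    refine Finsupp.sum_congr fun i _ => ?_
    simp only [Nat.succ_eq_add_one, pow_succ']
    rw [← mul_assoc, hcomm, add_mul]
    noncomm_ring
  rw [ev_spec S D ι t hfree a hr,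
    Finsupp.sum_add_index' (g_zero S D a) (by intro i b₁ b₂; simp [add_mul]),
    Finsupp.sum_mapRange_index (g_zero S D a),
    Finsupp.sum_mapDomain_index_inj Nat.succ_injective,
    Finsupp.sum_mapRange_index (fun i => by simp)]
  have hev : ev S D ι t hfree a r = c.sum fun i k => k * Ncoef S D a i := rfl
  rw [← Finsupp.sum_add]
  rw [hev, map_finsuppSum S, map_finsuppSum D, Finsupp.sum_mul, ← Finsupp.sum_add]
  refine Finsupp.sum_congr fun i _ => ?_
  rw [map_mul, hD]
  show D _ * Ncoef S D a i + S _ * (S (Ncoef S D a i) * a + D (Ncoef S D a i)) = _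
  noncomm_ring

theorem ev_pow (a : A) (i : ℕ) : ev S D ι t hfree a (t ^ i) = Ncoef S D a i := by
  have h : t ^ i = (Finsupp.single i (1 : A)).sum fun i k => ι k * t ^ i := by
    rw [Finsupp.sum_single_index (h_zero ι t i)]; simp
  rw [ev_spec S D ι t hfree a h, Finsupp.sum_single_index (g_zero S D a i), one_mul]

theorem ev_iota (a x : A) : ev S D ι t hfree a (ι x) = x := by
  have h : ι x = (Finsupp.single 0 x).sum fun i k => ι k * t ^ i := by
    rw [Finsupp.sum_single_index (h_zero ι t 0)]; simp
  rw [ev_spec S D ι t hfree a h, Finsupp.sum_single_index (g_zero S D a 0)]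
  simp [Ncoef]

theorem D_one (hD : ∀ x y : A, D (x * y) = S x * D y + D x * y) : D 1 = 0 := by
  have h := hD 1 1
  rw [mul_one, show S (1 : A) = 1 from map_one S, one_mul, mul_one] at h
  have h2 : D 1 + 0 = D 1 + D 1 := by rw [add_zero]; exact h
  exact (add_left_cancel h2).symm

theorem ev_t (hD : ∀ x y : A, D (x * y) = S x * D y + D x * y) (a : A) :
    ev S D ι t hfree a t = a := by
  have h := ev_pow S D ι t hfree a 1
  rw [pow_one] at h
  rw [h]
  show S 1 * a + D 1 = a
  rw [map_one, one_mul, D_one S D hD, add_zero]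

theorem ev_mul_linear (hD : ∀ x y : A, D (x * y) = S x * D y + D x * y)
    (hcomm : ∀ x : A, t * ι x = ι (S x) * t + ι (D x)) (a : A) (q : R) :
    ev S D ι t hfree a (q * (t - ι a)) = 0 := by
  have h0 : ev S D ι t hfree a (t - ι a) = 0 := by
    rw [sub_eq_add_neg, ev_add, ev_neg, ev_t S D ι t hfree hD, ev_iota, add_neg_cancel]
  have hpow : ∀ i : ℕ, ev S D ι t hfree a (t ^ i * (t - ι a)) = 0 := by
    intro i
    induction i with
    | zero => simpa using h0
    | succ i ih =>
      rw [pow_succ', mul_assoc, ev_t_mul S D ι t hfree hD hcomm, ih, map_zero, map_zero,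
        zero_mul, add_zero]
  have hq : q * (t - ι a) = (coeffs ι t hfree q).sum
      fun i k => ι k * t ^ i * (t - ι a) := by
    conv_lhs => rw [coeffs_spec ι t hfree q]
    rw [Finsupp.sum_mul]
  rw [hq]
  let E : R →+ A := AddMonoidHom.mk' (ev S D ι t hfree a) (ev_add S D ι t hfree a)
  show E _ = 0
  rw [map_finsuppSum]
  refine Finset.sum_eq_zero fun i _ => ?_
  show ev S D ι t hfree a _ = 0
  rw [mul_assoc, ev_iota_mul, hpow, mul_zero]

theorem ev_quadratic (hD : ∀ x y : A, D (x * y) = S x * D y + D x * y) (z e₀ e₁ : A) :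
    ev S D ι t hfree z (t ^ 2 + ι e₁ * t + ι e₀) = S z * z + D z + e₁ * z + e₀ := by
  have hN1 : Ncoef S D z 1 = z := by
    show S 1 * z + D 1 = z
    rw [map_one, one_mul, D_one S D hD, add_zero]
  have hN2 : Ncoef S D z 2 = S z * z + D z := by
    show S (Ncoef S D z 1) * z + D (Ncoef S D z 1) = _
    rw [hN1]
  rw [ev_add, ev_add, ev_iota, ev_iota_mul, ev_t S D ι t hfree hD, ev_pow, hN2]

end Aux

/-- Characterization of rings admitting common left multiples of linear polynomials:
in `R = A[t;S,D]` (any ring `R` with `ι : A →+* R`, `t : R` satisfying the commutation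
rule and such that every element of `R` is uniquely `Σ ι(cᵢ)tⁱ`), the following are
equivalent: (1) every pair `a, b` admits a monic degree-2 polynomial in
`R(t−a) ∩ R(t−b)`; (2) for all `r, b` there is `c` with `c·r = S(r)·b + D(r)`. -/
theorem monic_degree_two_iff {A R : Type*} [Ring A] [Ring R]
    (S : A →+* A) (D : A →+ A)
    (hD : ∀ x y : A, D (x * y) = S x * D y + D x * y)
    (ι : A →+* R) (t : R)
    (hcomm : ∀ x : A, t * ι x = ι (S x) * t + ι (D x))
    (hfree : ∀ r : R, ∃! c : ℕ →₀ A, r = c.sum fun i k => ι k * t ^ i) :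
    (∀ a b : A, ∃ e₀ e₁ : A,
        t ^ 2 + ι e₁ * t + ι e₀ ∈ Ideal.span {t - ι a} ⊓ Ideal.span {t - ι b}) ↔
      ∀ r b : A, ∃ c : A, c * r = S r * b + D r := by
  constructor
  · -- (1) → (2)
    intro h1 r b
    obtain ⟨e₀, e₁, hm⟩ := h1 (r + b) b
    rw [Submodule.mem_inf] at hm
    obtain ⟨q1, hq1⟩ := Submodule.mem_span_singleton.1 hm.1
    obtain ⟨q2, hq2⟩ := Submodule.mem_span_singleton.1 hm.2
    rw [smul_eq_mul] at hq1 hq2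
    have hev : ∀ z : A, ∀ q : R, q * (t - ι z) = t ^ 2 + ι e₁ * t + ι e₀ →
        S z * z + D z + e₁ * z + e₀ = 0 := by
      intro z q hq
      have h0 := ev_mul_linear S D ι t hfree hD hcomm z q
      rw [hq, ev_quadratic S D ι t hfree hD] at h0
      exact h0
    have hFa := hev (r + b) q1 hq1
    have hFb := hev b q2 hq2
    rw [map_add S, map_add D] at hFa
    refine ⟨-(S r + S b + e₁), ?_⟩
    have key : -(S r + S b + e₁) * r - (S r * b + D r) =
        -(((S r + S b) * (r + b) + (D r + D b) + e₁ * (r + b) + e₀) -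
          (S b * b + D b + e₁ * b + e₀)) := by noncomm_ring
    rw [hFa, hFb, sub_zero, neg_zero, sub_eq_zero] at key
    exact key
  · -- (2) → (1)
    intro h2 a b
    obtain ⟨c, hc⟩ := h2 (a - b) b
    set u : A := -c with hu
    have expand : ∀ w z : A, (t + ι w) * (t - ι z) =
        t ^ 2 + ι (w - S z) * t + ι (-(D z + w * z)) := by
      intro w z
      have key : (t + ι w) * (t - ι z) =
          t * t - (ι (S z) * t + ι (D z)) + ι w * t - ι w * ι z := by
        rw [← hcomm z]; noncomm_ring
      rw [key, map_sub, map_neg, map_add, map_mul]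
      noncomm_ring
    have h1 : u * (a - b) = -((S a - S b) * b + (D a - D b)) := by
      rw [hu, neg_mul, hc, map_sub, map_sub]
    have hv : D b + (u - S a + S b) * b = D a + u * a := by
      have key : (D b + (u - S a + S b) * b) - (D a + u * a) =
          -(u * (a - b)) - ((S a - S b) * b + (D a - D b)) := by noncomm_ring
      rw [h1, neg_neg, sub_self] at key
      exact sub_eq_zero.mp key
    refine ⟨-(D a + u * a), u - S a, Submodule.mem_inf.2 ⟨?_, ?_⟩⟩
    · refine Submodule.mem_span_singleton.2 ⟨t + ι u, ?_⟩
      rw [smul_eq_mul, expand]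
    · refine Submodule.mem_span_singleton.2 ⟨t + ι (u - S a + S b), ?_⟩
      rw [smul_eq_mul, expand, hv, add_sub_cancel_right]
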